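/- The stuffle product on the free ℚ-module spanned by words in {y_1, y_2, ...}, defined by 1*w = w*1 = w and (y_i u)*(y_j v) = y_i(u*(y_j v)) + y_j((y_i u)*v) + y_{i+j}(u*v), is associative: (u*v)*w = u*(v*w) for all words u, v, w. -/

import Mathlib

/-- The stuffle (harmonic) product of two words in the letters `y_i` (`i` a positive
integer), with values in the free `ℚ`-module spanned by such words. -/
noncomputable def stuffle : List ℕ+ → List ℕ+ → (List ℕ+ →₀ ℚ)
  | [], w => Finsupp.single w 1
  | i :: u, [] => Finsupp.single (i :: u) 1
  | i :: u, j :: v =>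
      Finsupp.mapDomain (fun w => i :: w) (stuffle u (j :: v))
      + Finsupp.mapDomain (fun w => j :: w) (stuffle (i :: u) v)
      + Finsupp.mapDomain (fun w => (i + j) :: w) (stuffle u v)
  termination_by u v => u.length + v.length

/-- The bilinear extension of the stuffle product to the free `ℚ`-module on words. -/
noncomputable def stuffleExt (a b : List ℕ+ →₀ ℚ) : List ℕ+ →₀ ℚ :=
  a.sum fun u cu => b.sum fun v cv => (cu * cv) • stuffle u v

lemma stuffle_nil_left (v : List ℕ+) : stuffle [] v = Finsupp.single v 1 := by
  rw [stuffle]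

lemma stuffle_nil_right (u : List ℕ+) : stuffle u [] = Finsupp.single u 1 := by
  cases u <;> rw [stuffle]

lemma stuffle_cons (i j : ℕ+) (u v : List ℕ+) :
    stuffle (i :: u) (j :: v)
      = Finsupp.mapDomain (fun w => i :: w) (stuffle u (j :: v))
      + Finsupp.mapDomain (fun w => j :: w) (stuffle (i :: u) v)
      + Finsupp.mapDomain (fun w => (i + j) :: w) (stuffle u v) := by
  rw [stuffle]

lemma ext_single_left (u : List ℕ+) (c : ℚ) (b : List ℕ+ →₀ ℚ) :
    stuffleExt (Finsupp.single u c) b = b.sum fun v cv => (c * cv) • stuffle u v := by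
  unfold stuffleExt
  apply Finsupp.sum_single_index
  simp

lemma ext_single_right (a : List ℕ+ →₀ ℚ) (v : List ℕ+) (c : ℚ) :
    stuffleExt a (Finsupp.single v c) = a.sum fun u cu => (cu * c) • stuffle u v := by
  unfold stuffleExt
  apply Finsupp.sum_congr
  intro u _
  apply Finsupp.sum_single_index
  simp

lemma ext_single_single (x y : List ℕ+) (c d : ℚ) :
    stuffleExt (Finsupp.single x c) (Finsupp.single y d) = (c * d) • stuffle x y := by
  rw [ext_single_left]
  apply Finsupp.sum_single_index
  simp

lemma ext_zero_left (b : List ℕ+ →₀ ℚ) : stuffleExt 0 b = 0 := by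
  simp [stuffleExt]

lemma ext_zero_right (a : List ℕ+ →₀ ℚ) : stuffleExt a 0 = 0 := by
  simp [stuffleExt]

lemma ext_add_left (a a' b : List ℕ+ →₀ ℚ) :
    stuffleExt (a + a') b = stuffleExt a b + stuffleExt a' b := by
  unfold stuffleExt
  apply Finsupp.sum_add_index'
  · intro u; simp
  · intro u c1 c2; simp [add_mul, add_smul, Finsupp.sum_add]

lemma ext_add_right (a b b' : List ℕ+ →₀ ℚ) :
    stuffleExt a (b + b') = stuffleExt a b + stuffleExt a b' := by
  unfold stuffleExt
  rw [← Finsupp.sum_add]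
  apply Finsupp.sum_congr
  intro u _
  apply Finsupp.sum_add_index'
  · intro v; simp
  · intro v c1 c2; simp [mul_add, add_smul]

lemma ext_empty_left (b : List ℕ+ →₀ ℚ) : stuffleExt (Finsupp.single [] 1) b = b := by
  rw [ext_single_left]
  conv_rhs => rw [← b.sum_single]
  apply Finsupp.sum_congr
  intro v _
  simp [stuffle_nil_left, Finsupp.smul_single]

lemma ext_empty_right (a : List ℕ+ →₀ ℚ) : stuffleExt a (Finsupp.single [] 1) = a := by
  rw [ext_single_right]
  conv_rhs => rw [← a.sum_single]
  apply Finsupp.sum_congr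
  intro u _
  simp [stuffle_nil_right, Finsupp.smul_single]

lemma extL (i : ℕ+) (a : List ℕ+ →₀ ℚ) (k : ℕ+) (w : List ℕ+) :
    stuffleExt (Finsupp.mapDomain (fun x => i :: x) a) (Finsupp.single (k :: w) 1)
      = Finsupp.mapDomain (fun x => i :: x) (stuffleExt a (Finsupp.single (k :: w) 1))
      + Finsupp.mapDomain (fun x => k :: x)
          (stuffleExt (Finsupp.mapDomain (fun x => i :: x) a) (Finsupp.single w 1))
      + Finsupp.mapDomain (fun x => (i + k) :: x) (stuffleExt a (Finsupp.single w 1)) := by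
  induction a using Finsupp.induction_linear with
  | zero => simp [ext_zero_left]
  | add f g hf hg =>
      simp only [Finsupp.mapDomain_add, ext_add_left, hf, hg]
      abel
  | single x c =>
      rw [Finsupp.mapDomain_single]
      simp only [ext_single_single]
      rw [stuffle_cons]
      simp [smul_add, Finsupp.mapDomain_smul]

lemma extR (i : ℕ+) (u : List ℕ+) (j : ℕ+) (b : List ℕ+ →₀ ℚ) :
    stuffleExt (Finsupp.single (i :: u) 1) (Finsupp.mapDomain (fun x => j :: x) b)
      = Finsupp.mapDomain (fun x => i :: x)
          (stuffleExt (Finsupp.single u 1) (Finsupp.mapDomain (fun x => j :: x) b))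
      + Finsupp.mapDomain (fun x => j :: x) (stuffleExt (Finsupp.single (i :: u) 1) b)
      + Finsupp.mapDomain (fun x => (i + j) :: x) (stuffleExt (Finsupp.single u 1) b) := by
  induction b using Finsupp.induction_linear with
  | zero => simp [ext_zero_right]
  | add f g hf hg =>
      simp only [Finsupp.mapDomain_add, ext_add_right, hf, hg]
      abel
  | single y c =>
      rw [Finsupp.mapDomain_single]
      simp only [ext_single_single]
      rw [stuffle_cons]
      simp [smul_add, Finsupp.mapDomain_smul]

lemma key : ∀ n (u v w : List ℕ+), u.length + v.length + w.length = n →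
    stuffleExt (stuffle u v) (Finsupp.single w 1)
      = stuffleExt (Finsupp.single u 1) (stuffle v w) := by
  intro n
  induction n using Nat.strong_induction_on with
  | _ n ih =>
    intro u v w hn
    match u, v, w with
    | [], v, w =>
        rw [stuffle_nil_left, ext_empty_left]
        simp [ext_single_single]
    | u, [], w =>
        rw [stuffle_nil_right, stuffle_nil_left]
    | u, v, [] =>
        rw [ext_empty_right, stuffle_nil_right]
        simp [ext_single_single]
    | i :: u, j :: v, k :: w =>
        subst hn
        -- Expand LHS
        rw [stuffle_cons i j u v, ext_add_left, ext_add_left, extL, extL, extL]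
        -- Expand RHS
        rw [stuffle_cons j k v w, ext_add_right, ext_add_right, extR, extR, extR]
        -- combine map_k terms on LHS: they come from the three extL applications
        have IHw : stuffleExt (stuffle (i :: u) (j :: v)) (Finsupp.single w 1)
            = stuffleExt (Finsupp.single (i :: u) 1) (stuffle (j :: v) w) := by
          apply ih _ (by simp only [List.length_cons]; omega) _ _ _ rfl
        have IHu : stuffleExt (stuffle u (j :: v)) (Finsupp.single (k :: w) 1)
            = stuffleExt (Finsupp.single u 1) (stuffle (j :: v) (k :: w)) := by
          apply ih _ (by simp only [List.length_cons]; omega) _ _ _ rfl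
        have IHv : stuffleExt (stuffle (i :: u) v) (Finsupp.single (k :: w) 1)
            = stuffleExt (Finsupp.single (i :: u) 1) (stuffle v (k :: w)) := by
          apply ih _ (by simp only [List.length_cons]; omega) _ _ _ rfl
        have IHuv : stuffleExt (stuffle u v) (Finsupp.single (k :: w) 1)
            = stuffleExt (Finsupp.single u 1) (stuffle v (k :: w)) := by
          apply ih _ (by simp only [List.length_cons]; omega) _ _ _ rfl
        have IHvw : stuffleExt (stuffle (i :: u) v) (Finsupp.single w 1)
            = stuffleExt (Finsupp.single (i :: u) 1) (stuffle v w) := by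
          apply ih _ (by simp only [List.length_cons]; omega) _ _ _ rfl
        have IHuw : stuffleExt (stuffle u (j :: v)) (Finsupp.single w 1)
            = stuffleExt (Finsupp.single u 1) (stuffle (j :: v) w) := by
          apply ih _ (by simp only [List.length_cons]; omega) _ _ _ rfl
        have IHuvw : stuffleExt (stuffle u v) (Finsupp.single w 1)
            = stuffleExt (Finsupp.single u 1) (stuffle v w) := by
          apply ih _ (by simp only [List.length_cons]; omega) _ _ _ rfl
        -- group map_k terms
        rw [stuffle_cons i j u v] at IHw
        rw [ext_add_left, ext_add_left] at IHw
        rw [IHu, IHv, IHuv, IHvw, IHuw, IHuvw, ← IHw]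
        rw [stuffle_cons j k v w, ext_add_right, ext_add_right]
        have h3 : i + (j + k) = i + j + k := (add_assoc i j k).symm
        rw [h3]
        simp only [Finsupp.mapDomain_add]
        abel

theorem stuffle_assoc (u v w : List ℕ+) :
    stuffleExt (stuffle u v) (Finsupp.single w 1)
      = stuffleExt (Finsupp.single u 1) (stuffle v w) :=
  key _ u v w rfl
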